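/- Assume additionally r ≡ 3 (mod 4), and let ρ ∈ F be an element with N(ρ) = −1. For each natural number a with 1 ≤ a ≤ (r−1)/2 define e⁻_a : F → ℂ by e⁻_a(z) = ∑_{j=0}^{r} (−1)^j·𝟙[z = u^j·a·ρ] (a viewed in F via the algebra map from ZMod r). Then Ŝ(e⁻_a) = ∑_{b=1}^{(r−1)/2} (∑_{j=0}^{r} (−1)^j·ζ^{−a·b·Tr(u^j)})·e⁻_b and T̂(e⁻_a) = ζ^{a²}·e⁻_a, where a·b and a² are computed in ZMod r. In particular the span of {e⁻_a : 1 ≤ a ≤ (r−1)/2} is invariant under Ŝ and T̂ (Lemma 3.2 of the paper). -/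

import Mathlib

open Complex Finset

/-- For `n ∈ ZMod r`, the complex number `ζ^n = exp(2πi·n̂/r)` where `n̂` is the
canonical lift of `n`. -/
noncomputable def zmodExp (r : ℕ) (n : ZMod r) : ℂ :=
  Complex.exp (2 * Real.pi * Complex.I * (n.val : ℂ) / (r : ℂ))

/-- The S-matrix of the unfolded SL(2,ℤ)-representation:
`(Ŝf)(x) = ∑_{y ∈ F} ζ^{Tr(x^r·y)}·f(y)`. -/
noncomputable def Shat (r : ℕ) {F : Type*} [Field F] [Fintype F] [Algebra (ZMod r) F]
    (f : F → ℂ) : F → ℂ :=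
  fun x => ∑ y : F, zmodExp r (Algebra.trace (ZMod r) F (x ^ r * y)) * f y

/-- The T-matrix of the unfolded SL(2,ℤ)-representation: `(T̂f)(x) = ζ^{−N(x)}·f(x)`. -/
noncomputable def That (r : ℕ) {F : Type*} [Field F] [Fintype F] [Algebra (ZMod r) F]
    (f : F → ℂ) : F → ℂ :=
  fun x => zmodExp r (-(Algebra.norm (ZMod r) x)) * f x

/-- The alternating sum `s(m) = ∑_{j=0}^{r} (−1)^j·ζ^{m·Tr(u^j)}`. -/
noncomputable def sSum (r : ℕ) {F : Type*} [Field F] [Fintype F] [Algebra (ZMod r) F]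
    (u : F) (m : ZMod r) : ℂ :=
  ∑ j ∈ Finset.range (r + 1), (-1 : ℂ) ^ j * zmodExp r (m * Algebra.trace (ZMod r) F (u ^ j))

open scoped Classical

/-- The basis vector `e⁻_a(z) = ∑_{j=0}^{r} (−1)^j·𝟙[z = u^j·a·ρ]`. -/
noncomputable def eMinus (r : ℕ) {F : Type*} [Field F] [Fintype F] [Algebra (ZMod r) F]
    (u ρ : F) (a : ℕ) : F → ℂ :=
  fun z => ∑ j ∈ Finset.range (r + 1),
    (-1 : ℂ) ^ j * (if z = u ^ j * algebraMap (ZMod r) F (a : ZMod r) * ρ then 1 else 0)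

/-- Auxiliary: powers modulo the order of a root of unity. -/
lemma auxPowModCancel {M : Type*} [Monoid M] {ω : M} {n : ℕ} (h : ω ^ n = 1) (x : ℕ) :
    ω ^ (x % n) = ω ^ x := by
  conv_rhs => rw [← Nat.mod_add_div x n]
  rw [pow_add, pow_mul, h, one_pow, mul_one]

/-- Auxiliary: `(-1)^(x % n) = (-1)^x` for even `n`. -/
lemma auxNegOnePowMod {n : ℕ} (hn : Even n) (x : ℕ) : (-1 : ℂ) ^ (x % n) = (-1 : ℂ) ^ x :=
  auxPowModCancel hn.neg_one_pow x

/-- Lemma 3.2: for `r ≡ 3 (mod 4)` and `ρ` of norm `−1`,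
`Ŝ(e⁻_a) = ∑_b (∑_j (−1)^j ζ^{−ab·Tr(u^j)})·e⁻_b` and `T̂(e⁻_a) = ζ^{a²}·e⁻_a`. -/
theorem stmt3 (r : ℕ) (hr : r.Prime) (hodd : Odd r) (h3 : r % 3 = 2) (h4 : r % 4 = 3)
    (F : Type*) [Field F] [Fintype F] [Algebra (ZMod r) F]
    (hcard : Fintype.card F = r ^ 2)
    (u : F) (hu : orderOf u = r + 1)
    (ρ : F) (hρ : Algebra.norm (ZMod r) ρ = -1)
    (a : ℕ) (ha1 : 1 ≤ a) (ha2 : a ≤ (r - 1) / 2) :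
    Shat r (eMinus r u ρ a) =
      (fun z => ∑ b ∈ Finset.Icc 1 ((r - 1) / 2),
        (∑ j ∈ Finset.range (r + 1),
          (-1 : ℂ) ^ j *
            zmodExp r (-((a : ZMod r) * (b : ZMod r) * Algebra.trace (ZMod r) F (u ^ j)))) *
          eMinus r u ρ b z) ∧
    That r (eMinus r u ρ a) = (fun z => zmodExp r ((a : ZMod r) ^ 2) * eMinus r u ρ a z) := by
  haveI hFact : Fact r.Prime := ⟨hr⟩
  have hr2' : r % 2 = 1 := Nat.odd_iff.mp hodd
  have hr3 : 3 ≤ r := by omega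
  haveI : Fact (2 < r) := ⟨by omega⟩
  have hevenN : Even (r + 1) := Nat.even_iff.mpr (by omega)
  haveI : CharP F r := charP_of_injective_algebraMap' (ZMod r) (A := F) r
  have hinj : Function.Injective (algebraMap (ZMod r) F) := (algebraMap (ZMod r) F).injective
  have hu1 : u ^ (r + 1) = 1 := by rw [← hu]; exact pow_orderOf_eq_one u
  have hu0 : u ≠ 0 := by
    rintro rfl
    rw [zero_pow (by omega : r + 1 ≠ 0)] at hu1
    exact zero_ne_one hu1
  have hxrr : ∀ x : F, x ^ (r * r) = x := fun x => by
    have h := FiniteField.pow_card x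
    rwa [hcard, pow_two] at h
  -- the Frobenius as an algebra automorphism
  obtain ⟨φ, hφ⟩ : ∃ φ : F ≃ₐ[ZMod r] F, ∀ x, φ x = x ^ r :=
    ⟨{ toFun := fun x => x ^ r
       invFun := fun x => x ^ r
       left_inv := fun x => by show (x ^ r) ^ r = x; rw [← pow_mul]; exact hxrr x
       right_inv := fun x => by show (x ^ r) ^ r = x; rw [← pow_mul]; exact hxrr x
       map_mul' := fun x y => mul_pow x y r
       map_add' := fun x y => add_pow_char x y r
       commutes' := fun c => by
         show (algebraMap (ZMod r) F c) ^ r = algebraMap (ZMod r) F c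
         rw [← map_pow, ZMod.pow_card] }, fun _ => rfl⟩
  have hfr : Module.finrank (ZMod r) F = 2 := by
    have h := Module.card_eq_pow_finrank (K := ZMod r) (V := F)
    rw [hcard, ZMod.card] at h
    exact (Nat.pow_right_injective hr.two_le h.symm)
  have hune : u ^ r ≠ u := by
    intro h
    have h2 : u ^ (r - 1) * u = 1 * u := by
      rw [one_mul, ← pow_succ, Nat.sub_add_cancel (by omega)]; exact h
    have h3' : orderOf u ∣ r - 1 := orderOf_dvd_of_pow_eq_one (mul_right_cancel₀ hu0 h2)
    rw [hu] at h3'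
    have := Nat.le_of_dvd (by omega) h3'
    omega
  have hφ1 : φ ≠ 1 := by
    intro h
    apply hune
    have := congrArg (fun ψ : F ≃ₐ[ZMod r] F => ψ u) h
    simpa [hφ] using this
  have hmem1 : (1 : F ≃ₐ[ZMod r] F) ∉ ({φ} : Finset (F ≃ₐ[ZMod r] F)) := by
    simp only [Finset.mem_singleton]
    exact fun h => hφ1 h.symm
  have huniv : (Finset.univ : Finset (F ≃ₐ[ZMod r] F)) = {1, φ} := by
    symm
    apply Finset.eq_univ_of_card
    rw [Finset.card_insert_of_notMem hmem1, Finset.card_singleton,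
      ← Nat.card_eq_fintype_card, IsGalois.card_aut_eq_finrank, hfr]
  have traceKey : ∀ x : F, algebraMap (ZMod r) F (Algebra.trace (ZMod r) F x) = x + x ^ r :=
    fun x => by
      rw [trace_eq_sum_automorphisms, huniv, Finset.sum_insert hmem1, Finset.sum_singleton, hφ]
      simp
  have normKey : ∀ x : F, algebraMap (ZMod r) F (Algebra.norm (ZMod r) x) = x ^ (r + 1) :=
    fun x => by
      rw [Algebra.norm_eq_prod_automorphisms, huniv, Finset.prod_insert hmem1,
        Finset.prod_singleton, hφ]
      simp [pow_succ']
  have traceFrob : ∀ x : F, Algebra.trace (ZMod r) F (x ^ r) = Algebra.trace (ZMod r) F x :=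
    fun x => hinj (by rw [traceKey, traceKey, ← pow_mul, hxrr, add_comm])
  have traceSmul : ∀ (c : ZMod r) (x : F),
      Algebra.trace (ZMod r) F (algebraMap (ZMod r) F c * x) = c * Algebra.trace (ZMod r) F x :=
    fun c x => by rw [← Algebra.smul_def, map_smul, smul_eq_mul]
  have powZ : ∀ c : ZMod r, c ^ (r + 1) = c ^ 2 := fun c => by
    rw [pow_succ, ZMod.pow_card, sq]
  have hρ1 : ρ ^ (r + 1) = -1 := by
    rw [← (normKey ρ), hρ, map_neg, map_one]
  have hρ0 : ρ ≠ 0 := by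
    rintro rfl
    rw [zero_pow (by omega : r + 1 ≠ 0)] at hρ1
    exact one_ne_zero (neg_eq_zero.mp hρ1.symm)
  -- basic facts about the indices b
  have hbne : ∀ b : ℕ, 1 ≤ b → 2 * b ≤ r - 1 → ((b : ZMod r) ≠ 0) := by
    intro b h1 h2 h
    rw [ZMod.natCast_eq_zero_iff] at h
    have := Nat.le_of_dvd (by omega) h
    omega
  have hbinj : ∀ b b' : ℕ, 1 ≤ b → 2 * b ≤ r - 1 → 1 ≤ b' → 2 * b' ≤ r - 1 →
      (b : ZMod r) ^ 2 = (b' : ZMod r) ^ 2 → b = b' := by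
    intro b b' h1 h2 h1' h2' h
    have hf : ((b : ZMod r) - b') * ((b : ZMod r) + b') = 0 := by linear_combination h
    rcases mul_eq_zero.mp hf with h0 | h0
    · have hbb : (b : ZMod r) = b' := sub_eq_zero.mp h0
      have hv := congrArg ZMod.val hbb
      rwa [ZMod.val_cast_of_lt (by omega), ZMod.val_cast_of_lt (by omega)] at hv
    · have hbb : ((b + b' : ℕ) : ZMod r) = 0 := by push_cast; exact h0
      rw [ZMod.natCast_eq_zero_iff] at hbb
      have := Nat.le_of_dvd (by omega) hbb
      omega
  have hupow_key : ∀ k k' : ℕ, k ≤ k' → k' < r + 1 → u ^ k = u ^ k' → k = k' := by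
    intro k k' hkk hk' h
    have h1 : u ^ k * u ^ (k' - k) = u ^ k * 1 := by
      rw [← pow_add, mul_one, show k + (k' - k) = k' from by omega]
      exact h.symm
    have h2 : u ^ (k' - k) = 1 := mul_left_cancel₀ (pow_ne_zero k hu0) h1
    have h3 := orderOf_dvd_of_pow_eq_one h2
    rw [hu] at h3
    rcases Nat.eq_zero_or_pos (k' - k) with h4 | h4
    · omega
    · have := Nat.le_of_dvd h4 h3
      omega
  have hupow_inj : ∀ k k' : ℕ, k < r + 1 → k' < r + 1 → u ^ k = u ^ k' → k = k' := by
    intro k k' hk hk' h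
    rcases le_total k k' with h' | h'
    · exact hupow_key k k' h' hk' h
    · exact (hupow_key k' k h' hk h.symm).symm
  -- all (r+1)-st roots of unity are powers of u
  have humem : ∀ y : F, y ^ (r + 1) = 1 → ∃ k, k < r + 1 ∧ y = u ^ k := by
    intro y hy
    by_contra hcon
    push_neg at hcon
    set p : Polynomial F := Polynomial.X ^ (r + 1) - Polynomial.C 1 with hp
    have hpm : p.Monic := Polynomial.monic_X_pow_sub_C 1 (by omega)
    have hdeg : p.natDegree = r + 1 := Polynomial.natDegree_X_pow_sub_C
    have hroot : ∀ z : F, z ^ (r + 1) = 1 → z ∈ p.roots.toFinset := by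
      intro z hz
      rw [Multiset.mem_toFinset, Polynomial.mem_roots hpm.ne_zero]
      simp [hp, Polynomial.IsRoot, hz]
    set s : Finset F := insert y ((Finset.range (r + 1)).image (u ^ ·)) with hs
    have hscard : s.card = r + 2 := by
      rw [hs, Finset.card_insert_of_notMem, Finset.card_image_of_injOn, Finset.card_range]
      · intro k hk k' hk' h
        exact hupow_inj k k' (Finset.mem_range.mp hk) (Finset.mem_range.mp hk') h
      · intro h
        obtain ⟨k, hk, hk2⟩ := Finset.mem_image.mp h
        exact hcon k (Finset.mem_range.mp hk) hk2.symm
    have hsub : s ⊆ p.roots.toFinset := by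
      intro z hz
      rcases Finset.mem_insert.mp hz with h | h
      · exact hroot z (h ▸ hy)
      · obtain ⟨k, _, rfl⟩ := Finset.mem_image.mp h
        exact hroot _ (by rw [← pow_mul, mul_comm, pow_mul, hu1, one_pow])
    have h1 := Finset.card_le_card hsub
    have h2 : p.roots.toFinset.card ≤ r + 1 :=
      le_trans (Multiset.toFinset_card_le _) (by simpa [hdeg] using p.card_roots')
    omega
  have hzexp0 : zmodExp r 0 = 1 := by
    unfold zmodExp
    rw [ZMod.val_zero]
    simp
  -- the "norm computation" for elements of the standard form
  have hnormval : ∀ (c : ZMod r) (k₀ : ℕ),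
      (u ^ k₀ * algebraMap (ZMod r) F c * ρ) ^ (r + 1) = -algebraMap (ZMod r) F (c ^ 2) := by
    intro c k₀
    rw [mul_pow, mul_pow, ← pow_mul, mul_comm k₀ (r + 1), pow_mul, hu1, one_pow, one_mul,
      ← map_pow, hρ1, powZ]
    ring
  have ha2' : 2 * a ≤ r - 1 := by omega
  have ha0 : ((a : ℕ) : ZMod r) ≠ 0 := hbne a ha1 ha2'
  have hA0 : algebraMap (ZMod r) F ((a : ℕ) : ZMod r) ≠ 0 := fun h =>
    ha0 (hinj (by rw [h, map_zero]))
  -- pointwise formula for Shat applied to eMinus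
  have Shat_apply : ∀ x : F, Shat r (eMinus r u ρ a) x =
      ∑ j ∈ Finset.range (r + 1), (-1 : ℂ) ^ j *
        zmodExp r (Algebra.trace (ZMod r) F
          (x ^ r * (u ^ j * algebraMap (ZMod r) F ((a : ℕ) : ZMod r) * ρ))) := by
    intro x
    unfold Shat eMinus
    simp only [Finset.mul_sum]
    rw [Finset.sum_comm]
    refine Finset.sum_congr rfl fun j _ => ?_
    have hstep : ∀ y : F,
        zmodExp r (Algebra.trace (ZMod r) F (x ^ r * y)) *
          ((-1 : ℂ) ^ j *
            (if y = u ^ j * algebraMap (ZMod r) F ((a : ℕ) : ZMod r) * ρ then 1 else 0)) =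
        (if y = u ^ j * algebraMap (ZMod r) F ((a : ℕ) : ZMod r) * ρ then
          (-1 : ℂ) ^ j * zmodExp r (Algebra.trace (ZMod r) F (x ^ r * y)) else 0) := by
      intro y; split_ifs <;> ring
    rw [Finset.sum_congr rfl fun y _ => hstep y, Finset.sum_ite_eq' Finset.univ _ _,
      if_pos (Finset.mem_univ _)]
  -- the T-part
  have Tpart : That r (eMinus r u ρ a) =
      (fun z => zmodExp r (((a : ℕ) : ZMod r) ^ 2) * eMinus r u ρ a z) := by
    funext x
    unfold That
    by_cases h0 : eMinus r u ρ a x = 0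
    · rw [h0, mul_zero, mul_zero]
    · have hna : ∃ j ∈ Finset.range (r + 1), (-1 : ℂ) ^ j *
          (if x = u ^ j * algebraMap (ZMod r) F ((a : ℕ) : ZMod r) * ρ then 1 else 0) ≠ 0 := by
        by_contra hc
        push_neg at hc
        exact h0 (Finset.sum_eq_zero hc)
      obtain ⟨j, _, hne⟩ := hna
      have hxe : x = u ^ j * algebraMap (ZMod r) F ((a : ℕ) : ZMod r) * ρ := by
        by_contra hxx
        rw [if_neg hxx, mul_zero] at hne
        exact hne rfl
      have hNx : Algebra.norm (ZMod r) x = -(((a : ℕ) : ZMod r) ^ 2) :=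
        hinj (by rw [normKey, hxe, hnormval, map_neg])
      rw [hNx, neg_neg]
  refine ⟨?_, Tpart⟩
  -- the S-part
  funext x
  rw [Shat_apply x]
  by_cases hx : ∃ b ∈ Finset.Icc 1 ((r - 1) / 2), ∃ k ∈ Finset.range (r + 1),
      x = u ^ k * algebraMap (ZMod r) F ((b : ℕ) : ZMod r) * ρ
  · -- main case : x = u^k · b · ρ
    obtain ⟨b, hb, k, hk, rfl⟩ := hx
    have hbfacts := Finset.mem_Icc.mp hb
    have hb1 : 1 ≤ b := hbfacts.1
    have hb2 : 2 * b ≤ r - 1 := by omega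
    have hB0 : algebraMap (ZMod r) F ((b : ℕ) : ZMod r) ≠ 0 := fun h =>
      hbne b hb1 hb2 (hinj (by rw [h, map_zero]))
    have hkr : k < r + 1 := Finset.mem_range.mp hk
    have hBr : (algebraMap (ZMod r) F ((b : ℕ) : ZMod r)) ^ r
        = algebraMap (ZMod r) F ((b : ℕ) : ZMod r) := by
      rw [← map_pow, ZMod.pow_card]
    have hρr : ρ ^ r * ρ = -1 := by rw [← pow_succ]; exact hρ1
    have helem : ∀ j : ℕ,
        (u ^ k * algebraMap (ZMod r) F ((b : ℕ) : ZMod r) * ρ) ^ r *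
          (u ^ j * algebraMap (ZMod r) F ((a : ℕ) : ZMod r) * ρ)
        = algebraMap (ZMod r) F (-(((a : ℕ) : ZMod r) * ((b : ℕ) : ZMod r))) *
            u ^ ((k * r + j) % (r + 1)) := by
      intro j
      rw [show u ^ ((k * r + j) % (r + 1)) = u ^ (k * r + j) from by
        rw [← hu]; exact pow_mod_orderOf u _]
      rw [map_neg, map_mul, mul_pow, mul_pow, hBr, ← pow_mul, pow_add]
      calc (u ^ (k * r) * algebraMap (ZMod r) F ((b : ℕ) : ZMod r) * ρ ^ r) *
            (u ^ j * algebraMap (ZMod r) F ((a : ℕ) : ZMod r) * ρ)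
          = (ρ ^ r * ρ) * (algebraMap (ZMod r) F ((a : ℕ) : ZMod r) *
              algebraMap (ZMod r) F ((b : ℕ) : ZMod r) * (u ^ (k * r) * u ^ j)) := by ring
        _ = -(algebraMap (ZMod r) F ((a : ℕ) : ZMod r) *
              algebraMap (ZMod r) F ((b : ℕ) : ZMod r)) * (u ^ (k * r) * u ^ j) := by
            rw [hρr]; ring
    have hkk : (-1 : ℂ) ^ k * (-1 : ℂ) ^ k = 1 := by
      rw [← pow_add]; exact Even.neg_one_pow ⟨k, rfl⟩
    have hsgn : ∀ j : ℕ, (-1 : ℂ) ^ j = (-1 : ℂ) ^ k * (-1 : ℂ) ^ ((k * r + j) % (r + 1)) := by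
      intro j
      rw [auxNegOnePowMod hevenN, pow_add,
        show (-1 : ℂ) ^ (k * r) = (-1 : ℂ) ^ k from by
          rw [mul_comm k r, pow_mul, hodd.neg_one_pow],
        ← mul_assoc, hkk, one_mul]
    have hLHS : (∑ j ∈ Finset.range (r + 1), (-1 : ℂ) ^ j *
          zmodExp r (Algebra.trace (ZMod r) F
            ((u ^ k * algebraMap (ZMod r) F ((b : ℕ) : ZMod r) * ρ) ^ r *
              (u ^ j * algebraMap (ZMod r) F ((a : ℕ) : ZMod r) * ρ))))
        = (-1 : ℂ) ^ k * ∑ j ∈ Finset.range (r + 1), (-1 : ℂ) ^ j *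
            zmodExp r (-((a : ZMod r) * (b : ZMod r) * Algebra.trace (ZMod r) F (u ^ j))) := by
      rw [Finset.mul_sum]
      rw [show (∑ j ∈ Finset.range (r + 1), (-1 : ℂ) ^ k * ((-1 : ℂ) ^ j *
            zmodExp r (-((a : ZMod r) * (b : ZMod r) * Algebra.trace (ZMod r) F (u ^ j)))))
          = ∑ j ∈ Finset.range (r + 1), (-1 : ℂ) ^ k * ((-1 : ℂ) ^ ((k * r + j) % (r + 1)) *
            zmodExp r (-((a : ZMod r) * (b : ZMod r) *
              Algebra.trace (ZMod r) F (u ^ ((k * r + j) % (r + 1)))))) from by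
        refine (Finset.sum_nbij' (fun j => (k * r + j) % (r + 1))
          (fun i => (k + i) % (r + 1)) ?_ ?_ ?_ ?_ ?_).symm
        · intro a' _; exact Finset.mem_range.mpr (Nat.mod_lt _ (by omega))
        · intro a' _; exact Finset.mem_range.mpr (Nat.mod_lt _ (by omega))
        · intro a' ha'
          show (k + (k * r + a') % (r + 1)) % (r + 1) = a'
          rw [Nat.add_mod_mod, show k + (k * r + a') = (r + 1) * k + a' from by ring,
            Nat.mul_add_mod, Nat.mod_eq_of_lt (Finset.mem_range.mp ha')]
        · intro a' ha'
          show (k * r + (k + a') % (r + 1)) % (r + 1) = a'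
          rw [Nat.add_mod_mod, show k * r + (k + a') = (r + 1) * k + a' from by ring,
            Nat.mul_add_mod, Nat.mod_eq_of_lt (Finset.mem_range.mp ha')]
        · intro a' _; rfl]
      refine Finset.sum_congr rfl fun j _ => ?_
      rw [helem j, traceSmul,
        show (-(((a : ℕ) : ZMod r) * ((b : ℕ) : ZMod r))) *
            Algebra.trace (ZMod r) F (u ^ ((k * r + j) % (r + 1)))
          = -((a : ZMod r) * (b : ZMod r) *
              Algebra.trace (ZMod r) F (u ^ ((k * r + j) % (r + 1)))) from by ring,
        hsgn j]
      ring
    rw [hLHS]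
    -- now evaluate the right-hand side
    have heval : ∀ b' ∈ Finset.Icc 1 ((r - 1) / 2),
        eMinus r u ρ b' (u ^ k * algebraMap (ZMod r) F ((b : ℕ) : ZMod r) * ρ)
        = if b' = b then (-1 : ℂ) ^ k else 0 := by
      intro b' hb'
      have hb'facts := Finset.mem_Icc.mp hb'
      unfold eMinus
      by_cases hbb : b' = b
      · subst hbb
        rw [if_pos rfl]
        rw [show (∑ j ∈ Finset.range (r + 1), (-1 : ℂ) ^ j *
              (if u ^ k * algebraMap (ZMod r) F ((b' : ℕ) : ZMod r) * ρ
                = u ^ j * algebraMap (ZMod r) F ((b' : ℕ) : ZMod r) * ρ then 1 else 0))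
            = ∑ j ∈ Finset.range (r + 1), (if j = k then (-1 : ℂ) ^ j else 0) from by
          refine Finset.sum_congr rfl fun j hj => ?_
          by_cases h : j = k
          · subst h; rw [if_pos rfl, if_pos rfl, mul_one]
          · rw [if_neg h, if_neg, mul_zero]
            intro heq
            exact h (hupow_inj j k (Finset.mem_range.mp hj) hkr
              (mul_right_cancel₀ hB0 (mul_right_cancel₀ hρ0 heq.symm)))]
        rw [Finset.sum_ite_eq' (Finset.range (r + 1)) k, if_pos hk]
      · rw [if_neg hbb]
        refine Finset.sum_eq_zero fun k' hk' => ?_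
        rw [if_neg, mul_zero]
        intro heq
        apply hbb
        have hpow := congrArg (· ^ (r + 1)) heq
        try simp only at hpow
        rw [hnormval, hnormval] at hpow
        exact (hbinj b b' hb1 hb2 hb'facts.1 (by omega)
          (hinj (neg_injective hpow))).symm
    have hRHS : (∑ b' ∈ Finset.Icc 1 ((r - 1) / 2),
          (∑ j ∈ Finset.range (r + 1), (-1 : ℂ) ^ j *
            zmodExp r (-((a : ZMod r) * (b' : ZMod r) * Algebra.trace (ZMod r) F (u ^ j)))) *
            eMinus r u ρ b' (u ^ k * algebraMap (ZMod r) F ((b : ℕ) : ZMod r) * ρ))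
        = (∑ j ∈ Finset.range (r + 1), (-1 : ℂ) ^ j *
            zmodExp r (-((a : ZMod r) * (b : ZMod r) * Algebra.trace (ZMod r) F (u ^ j)))) *
            (-1 : ℂ) ^ k := by
      calc (∑ b' ∈ Finset.Icc 1 ((r - 1) / 2),
          (∑ j ∈ Finset.range (r + 1), (-1 : ℂ) ^ j *
            zmodExp r (-((a : ZMod r) * (b' : ZMod r) * Algebra.trace (ZMod r) F (u ^ j)))) *
            eMinus r u ρ b' (u ^ k * algebraMap (ZMod r) F ((b : ℕ) : ZMod r) * ρ))
          = ∑ b' ∈ Finset.Icc 1 ((r - 1) / 2), (if b' = b then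
              (∑ j ∈ Finset.range (r + 1), (-1 : ℂ) ^ j *
                zmodExp r (-((a : ZMod r) * (b' : ZMod r) *
                  Algebra.trace (ZMod r) F (u ^ j)))) * (-1 : ℂ) ^ k else 0) := by
            refine Finset.sum_congr rfl fun b' hb' => ?_
            rw [heval b' hb']
            split_ifs <;> ring
        _ = (∑ j ∈ Finset.range (r + 1), (-1 : ℂ) ^ j *
              zmodExp r (-((a : ZMod r) * (b : ZMod r) * Algebra.trace (ZMod r) F (u ^ j)))) *
              (-1 : ℂ) ^ k := by
            rw [Finset.sum_ite_eq' (Finset.Icc 1 ((r - 1) / 2)) b, if_pos hb]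
    rw [hRHS]
    ring
  · -- remaining case : x is not of the standard form
    have hem0 : ∀ b' ∈ Finset.Icc 1 ((r - 1) / 2), eMinus r u ρ b' x = 0 := by
      intro b' hb'
      refine Finset.sum_eq_zero fun k' hk' => ?_
      rw [if_neg (fun heq => hx ⟨b', hb', k', hk', heq⟩), mul_zero]
    have hzero : ∀ b' ∈ Finset.Icc 1 ((r - 1) / 2),
        (∑ j ∈ Finset.range (r + 1), (-1 : ℂ) ^ j *
          zmodExp r (-((a : ZMod r) * (b' : ZMod r) * Algebra.trace (ZMod r) F (u ^ j)))) *
          eMinus r u ρ b' x = 0 := fun b' hb' => by rw [hem0 b' hb', mul_zero]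
    rw [Finset.sum_eq_zero hzero]
    by_cases hx0 : x = 0
    · subst hx0
      rw [show (∑ j ∈ Finset.range (r + 1), (-1 : ℂ) ^ j *
            zmodExp r (Algebra.trace (ZMod r) F
              ((0 : F) ^ r * (u ^ j * algebraMap (ZMod r) F ((a : ℕ) : ZMod r) * ρ))))
          = ∑ j ∈ Finset.range (r + 1), (-1 : ℂ) ^ j from by
        refine Finset.sum_congr rfl fun j _ => ?_
        rw [zero_pow (by omega : r ≠ 0), zero_mul, map_zero, hzexp0, mul_one]]
      rw [neg_one_geom_sum, if_pos hevenN]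
    · -- x ≠ 0 : involution argument
      set c : ZMod r := Algebra.norm (ZMod r) x with hc
      have hc0 : c ≠ 0 := by
        intro h
        apply hx0
        have : x ^ (r + 1) = 0 := by rw [← normKey, ← hc, h, map_zero]
        exact pow_eq_zero_iff (by omega : r + 1 ≠ 0) |>.mp this
      have hcx : c ^ ((r - 1) / 2) = 1 := by
        have hc1 : c ^ (r - 1) = 1 := ZMod.pow_card_sub_one_eq_one hc0
        have hsq : (c ^ ((r - 1) / 2)) ^ 2 = 1 := by
          rw [← pow_mul, show (r - 1) / 2 * 2 = r - 1 from by omega]; exact hc1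
        rcases mul_eq_zero.mp (show (c ^ ((r - 1) / 2) - 1) * (c ^ ((r - 1) / 2) + 1) = 0 from by
            linear_combination hsq) with h | h
        · exact sub_eq_zero.mp h
        · exfalso
          have hdneg : c ^ ((r - 1) / 2) = -1 := eq_neg_of_add_eq_zero_left h
          have hmo : Odd ((r - 1) / 2) := Nat.odd_iff.mpr (by omega)
          have hnegc : (-c) ^ ((r - 1) / 2) = 1 := by
            rw [neg_pow, hmo.neg_one_pow, hdneg]; ring
          have hsquare : IsSquare (-c) :=
            (ZMod.euler_criterion r (neg_ne_zero.mpr hc0)).mpr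
              (by rw [show r / 2 = (r - 1) / 2 from by omega]; exact hnegc)
          obtain ⟨e, he⟩ := hsquare
          have he0 : e ≠ 0 := by
            intro h'
            rw [h', mul_zero, neg_eq_zero] at he
            exact hc0 he
          have hev1 : 1 ≤ e.val := Nat.one_le_iff_ne_zero.mpr
            (fun h' => he0 ((ZMod.val_eq_zero e).mp h'))
          have hev2 : e.val < r := ZMod.val_lt e
          set b : ℕ := if e.val ≤ (r - 1) / 2 then e.val else r - e.val with hbdef
          have hbIcc : b ∈ Finset.Icc 1 ((r - 1) / 2) := by
            rw [Finset.mem_Icc, hbdef]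
            split_ifs with h' <;> omega
          have hbsq : ((b : ℕ) : ZMod r) ^ 2 = -c := by
            rw [hbdef]
            split_ifs with h'
            · rw [ZMod.natCast_val, ZMod.cast_id, sq]; exact he.symm
            · rw [Nat.cast_sub (by omega : e.val ≤ r), ZMod.natCast_self, zero_sub,
                ZMod.natCast_val, ZMod.cast_id, neg_sq, sq]
              exact he.symm
          have hbb1 : 1 ≤ b := (Finset.mem_Icc.mp hbIcc).1
          have hbb2 : 2 * b ≤ r - 1 := by
            have := (Finset.mem_Icc.mp hbIcc).2; omega
          have hD0 : algebraMap (ZMod r) F ((b : ℕ) : ZMod r) * ρ ≠ 0 :=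
            mul_ne_zero (fun h' => hbne b hbb1 hbb2 (hinj (by rw [h', map_zero]))) hρ0
          have hy : (x * (algebraMap (ZMod r) F ((b : ℕ) : ZMod r) * ρ)⁻¹) ^ (r + 1) = 1 := by
            have h1 : x ^ (r + 1) = algebraMap (ZMod r) F c := (normKey x).symm
            have h2 : (algebraMap (ZMod r) F ((b : ℕ) : ZMod r) * ρ) ^ (r + 1)
                = algebraMap (ZMod r) F c := by
              rw [mul_pow, ← map_pow, powZ, hbsq, hρ1, map_neg]; ring
            rw [mul_pow, inv_pow, h1, h2]
            exact mul_inv_cancel₀ (fun h' => hc0 (hinj (by rw [h', map_zero])))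
          obtain ⟨k, hkk, hke⟩ := humem _ hy
          apply hx
          refine ⟨b, hbIcc, k, Finset.mem_range.mpr hkk, ?_⟩
          have : x = u ^ k * (algebraMap (ZMod r) F ((b : ℕ) : ZMod r) * ρ) := by
            rw [← hke, inv_mul_cancel_right₀ hD0]
          rw [this, mul_assoc]
      -- now the norm of x is a nonzero square; set up the involution
      set w : F := x ^ r * algebraMap (ZMod r) F ((a : ℕ) : ZMod r) * ρ with hw
      have hw0 : w ≠ 0 := mul_ne_zero (mul_ne_zero (pow_ne_zero _ hx0) hA0) hρ0
      have hexp : (r - 1) * ((r + 1) / 2) = (r + 1) * ((r - 1) / 2) := by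
        obtain ⟨t, ht⟩ : ∃ t, r = 2 * t + 1 := ⟨r / 2, by omega⟩
        subst ht
        rw [show 2 * t + 1 - 1 = 2 * t from by omega,
          show (2 * t + 1 + 1) / 2 = t + 1 from by omega,
          show 2 * t / 2 = t from by omega]
        ring
      have hwpow : w ^ (r + 1) = algebraMap (ZMod r) F (-(c * ((a : ℕ) : ZMod r) ^ 2)) := by
        have e1 : (x ^ r) ^ (r + 1) = algebraMap (ZMod r) F c := by
          rw [← pow_mul, mul_comm r (r + 1), pow_mul,
            show x ^ (r + 1) = algebraMap (ZMod r) F c from (normKey x).symm,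
            ← map_pow, ZMod.pow_card]
        have e2 : (algebraMap (ZMod r) F ((a : ℕ) : ZMod r)) ^ (r + 1)
            = algebraMap (ZMod r) F (((a : ℕ) : ZMod r) ^ 2) := by
          rw [← map_pow, powZ]
        calc w ^ (r + 1) = (x ^ r) ^ (r + 1) *
              (algebraMap (ZMod r) F ((a : ℕ) : ZMod r)) ^ (r + 1) * ρ ^ (r + 1) := by
              rw [hw, mul_pow, mul_pow]
          _ = algebraMap (ZMod r) F c * algebraMap (ZMod r) F (((a : ℕ) : ZMod r) ^ 2) *
              (-1) := by rw [e1, e2, hρ1]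
          _ = algebraMap (ZMod r) F (-(c * ((a : ℕ) : ZMod r) ^ 2)) := by
              rw [map_neg, map_mul]; ring
      have hmo : Odd ((r - 1) / 2) := Nat.odd_iff.mpr (by omega)
      have hwhalf : w ^ ((r + 1) * ((r - 1) / 2)) = algebraMap (ZMod r) F (-1) := by
        rw [pow_mul, hwpow, ← map_pow]
        congr 1
        rw [show (-(c * ((a : ℕ) : ZMod r) ^ 2)) ^ ((r - 1) / 2)
            = (-1 : ZMod r) ^ ((r - 1) / 2) * c ^ ((r - 1) / 2) *
              (((a : ℕ) : ZMod r) ^ 2) ^ ((r - 1) / 2) from by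
          rw [← mul_pow, ← mul_pow]; ring_nf]
        rw [hmo.neg_one_pow, hcx, ← pow_mul,
          show 2 * ((r - 1) / 2) = r - 1 from by omega,
          ZMod.pow_card_sub_one_eq_one ha0]
        ring
      have hm2 : u ^ ((r + 1) / 2) = -1 := by
        have h2 : (u ^ ((r + 1) / 2)) ^ 2 = 1 := by
          rw [← pow_mul, show (r + 1) / 2 * 2 = r + 1 from by omega, hu1]
        have hne1 : u ^ ((r + 1) / 2) ≠ 1 := by
          intro h'
          have hdvd := orderOf_dvd_of_pow_eq_one h'
          rw [hu] at hdvd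
          have := Nat.le_of_dvd (by omega) hdvd
          omega
        rcases mul_eq_zero.mp (show (u ^ ((r + 1) / 2) - 1) * (u ^ ((r + 1) / 2) + 1) = 0 from by
            linear_combination h2) with h' | h'
        · exact absurd (sub_eq_zero.mp h') hne1
        · exact eq_neg_of_add_eq_zero_left h'
      have hwr1 : (w ^ (r - 1)) ^ (r + 1) = 1 := by
        rw [← pow_mul, mul_comm (r - 1) (r + 1), pow_mul, hwpow, ← map_pow,
          ZMod.pow_card_sub_one_eq_one (a := -(c * ((a : ℕ) : ZMod r) ^ 2))
            (by
              intro h'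
              rw [neg_eq_zero] at h'
              rcases mul_eq_zero.mp h' with h'' | h''
              · exact hc0 h''
              · exact ha0 (pow_eq_zero_iff (by omega : 2 ≠ 0) |>.mp h'')),
          map_one]
      obtain ⟨m, hm, hwm⟩ := humem _ hwr1
      have hmodd : Odd m := by
        have h1 : ((-1 : F)) ^ m = -1 := by
          calc ((-1 : F)) ^ m = (u ^ ((r + 1) / 2)) ^ m := by rw [hm2]
            _ = (u ^ m) ^ ((r + 1) / 2) := pow_right_comm u _ m
            _ = (w ^ (r - 1)) ^ ((r + 1) / 2) := by rw [hwm]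
            _ = w ^ ((r + 1) * ((r - 1) / 2)) := by
                rw [← pow_mul, hexp]
            _ = algebraMap (ZMod r) F (-1) := hwhalf
            _ = -1 := by rw [map_neg, map_one]
        by_contra heven
        rw [Nat.not_odd_iff_even] at heven
        rw [heven.neg_one_pow] at h1
        exact CharP.neg_one_ne_one F r h1.symm
      have hm2' : m % 2 = 1 := Nat.odd_iff.mp hmodd
      -- the involution j ↦ (m + (r+1) - j) % (r+1)
      have hterm : ∀ j : ℕ, x ^ r * (u ^ j * algebraMap (ZMod r) F ((a : ℕ) : ZMod r) * ρ)
          = w * u ^ j := fun j => by rw [hw]; ring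
      refine Finset.sum_involution (fun j _ => (m + (r + 1) - j) % (r + 1)) ?_ ?_ ?_ ?_
      · -- f j + f (g j) = 0
        intro j hj
        have hj1 : j < r + 1 := Finset.mem_range.mp hj
        have htr : Algebra.trace (ZMod r) F (x ^ r *
              (u ^ ((m + (r + 1) - j) % (r + 1)) * algebraMap (ZMod r) F ((a : ℕ) : ZMod r) * ρ))
            = Algebra.trace (ZMod r) F (x ^ r *
              (u ^ j * algebraMap (ZMod r) F ((a : ℕ) : ZMod r) * ρ)) := by
          rw [hterm, hterm]
          have hupow : u ^ ((m + (r + 1) - j) % (r + 1)) = u ^ m * (u ^ j) ^ r := by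
            rw [show u ^ ((m + (r + 1) - j) % (r + 1)) = u ^ (m + (r + 1) - j) from by
              rw [← hu]; exact pow_mod_orderOf u _]
            rw [show m + (r + 1) - j = m + ((r + 1) - j) from by omega, pow_add]
            congr 1
            have e1 : u ^ ((r + 1) - j) * u ^ j = 1 := by
              rw [← pow_add, show (r + 1) - j + j = r + 1 from by omega, hu1]
            have e2 : (u ^ j) ^ r * u ^ j = 1 := by
              rw [← pow_succ, ← pow_mul, mul_comm, pow_mul, hu1, one_pow]
            exact mul_right_cancel₀ (pow_ne_zero j hu0) (e1.trans e2.symm)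
          rw [hupow, ← hwm]
          have hww : w * w ^ (r - 1) = w ^ r := by
            conv_rhs => rw [show r = (r - 1) + 1 from by omega]
            rw [pow_succ']
          rw [← mul_assoc, hww, ← mul_pow, traceFrob]
        have hsgn2 : (-1 : ℂ) ^ ((m + (r + 1) - j) % (r + 1)) = -(-1 : ℂ) ^ j := by
          have h1 : (-1 : ℂ) ^ ((m + (r + 1) - j) % (r + 1)) = (-1 : ℂ) ^ (m + (r + 1) - j) :=
            auxNegOnePowMod hevenN _
          have h2 : (-1 : ℂ) ^ (m + (r + 1) - j) * (-1 : ℂ) ^ j = (-1 : ℂ) ^ (m + (r + 1)) := by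
            rw [← pow_add, show m + (r + 1) - j + j = m + (r + 1) from by omega]
          have h3 : (-1 : ℂ) ^ (m + (r + 1)) = -1 := by
            rw [pow_add, hmodd.neg_one_pow, hevenN.neg_one_pow, mul_one]
          have hjj : (-1 : ℂ) ^ j * (-1 : ℂ) ^ j = 1 := by
            rw [← pow_add]; exact Even.neg_one_pow ⟨j, rfl⟩
          calc (-1 : ℂ) ^ ((m + (r + 1) - j) % (r + 1))
              = (-1 : ℂ) ^ (m + (r + 1) - j) * ((-1 : ℂ) ^ j * (-1 : ℂ) ^ j) := by
                rw [hjj, mul_one, h1]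
            _ = ((-1 : ℂ) ^ (m + (r + 1) - j) * (-1 : ℂ) ^ j) * (-1 : ℂ) ^ j := by ring
            _ = -(-1 : ℂ) ^ j := by rw [h2, h3]; ring
        rw [htr, hsgn2]
        ring
      · -- no fixed point where f ≠ 0
        intro j hj _
        have hj1 : j < r + 1 := Finset.mem_range.mp hj
        intro heq
        replace heq : (m + (r + 1) - j) % (r + 1) = j := heq
        rcases le_or_gt j m with h' | h'
        · have e1 : (m + (r + 1) - j) % (r + 1) = m - j := by
            rw [show m + (r + 1) - j = (m - j) + (r + 1) from by omega, Nat.add_mod_right,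
              Nat.mod_eq_of_lt (by omega)]
          rw [e1] at heq
          omega
        · have e1 : (m + (r + 1) - j) % (r + 1) = m + (r + 1) - j :=
            Nat.mod_eq_of_lt (by omega)
          rw [e1] at heq
          omega
      · -- g maps into the range
        intro j hj
        exact Finset.mem_range.mpr (Nat.mod_lt _ (by omega))
      · -- g is an involution
        intro j hj
        have hj1 : j < r + 1 := Finset.mem_range.mp hj
        show (m + (r + 1) - (m + (r + 1) - j) % (r + 1)) % (r + 1) = j
        rcases le_or_gt j m with h' | h'
        · have e1 : (m + (r + 1) - j) % (r + 1) = m - j := by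
            rw [show m + (r + 1) - j = (m - j) + (r + 1) from by omega, Nat.add_mod_right,
              Nat.mod_eq_of_lt (by omega)]
          rw [e1, show m + (r + 1) - (m - j) = j + (r + 1) from by omega, Nat.add_mod_right,
            Nat.mod_eq_of_lt hj1]
        · have e1 : (m + (r + 1) - j) % (r + 1) = m + (r + 1) - j :=
            Nat.mod_eq_of_lt (by omega)
          rw [e1, show m + (r + 1) - (m + (r + 1) - j) = j from by omega,
            Nat.mod_eq_of_lt hj1]
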